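/- Let G_r be a pendant-augmented unit disk graph on a nonempty finite set P of points in ℝ² with pendants at a subset P₀ ⊆ P. Let D ⊆ P be a set of points such that: (i) the subgraph of G_r induced by D is connected; (ii) every dummy vertex is adjacent to some vertex of D; and (iii) for every v ∈ D, either the subgraph of G_r induced by D ∖ {v} is disconnected, or some dummy vertex has no neighbor in D ∖ {v}. Then G_r has an independent set I with 4·|I| ≥ |D|. (Paper's Lemma 2: there is an independent set of G_r containing at least |D|/4 vertices, where D is the subset computed by the Proposed algorithm.) -/

import Mathlib

/-- The pendant-augmented unit disk graph on a finite set `P` of points in the Euclidean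
plane with pendants at `P₀ ⊆ P`: the vertex set is the disjoint union of `P` (the `Sum.inl`
vertices) and one dummy vertex `Sum.inr u` for each `u ∈ P₀`; two distinct points of `P` are
adjacent iff their Euclidean distance is at most `1`; the dummy vertex of `u ∈ P₀` is adjacent
exactly to the point `u`; dummy vertices are pairwise nonadjacent. -/
def pendantUnitDiskGraph (P P₀ : Finset (EuclideanSpace ℝ (Fin 2))) :
    SimpleGraph ({p // p ∈ P} ⊕ {p // p ∈ P₀}) where
  Adj a b :=
    match a, b with
    | Sum.inl p, Sum.inl q =>
        p ≠ q ∧ dist (p : EuclideanSpace ℝ (Fin 2)) (q : EuclideanSpace ℝ (Fin 2)) ≤ 1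
    | Sum.inl p, Sum.inr u => (p : EuclideanSpace ℝ (Fin 2)) = (u : EuclideanSpace ℝ (Fin 2))
    | Sum.inr u, Sum.inl p => (p : EuclideanSpace ℝ (Fin 2)) = (u : EuclideanSpace ℝ (Fin 2))
    | Sum.inr _, Sum.inr _ => False
  symm := by
    refine ⟨?_⟩
    rintro (p | u) (q | w) h
    · exact ⟨h.1.symm, by rw [dist_comm]; exact h.2⟩
    · exact h
    · exact h
    · exact h
  loopless := by
    refine ⟨?_⟩
    rintro (p | u) h
    · exact h.1 rfl
    · exact h

open SimpleGraph

namespace PendantAux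

variable {V : Type*} [DecidableEq V] {G : SimpleGraph V} {D : Finset V} {r : V}

/-- There is a walk from `a` to `b` with support inside `D` avoiding `v`. -/
def Avoids (G : SimpleGraph V) (D : Finset V) (a b v : V) : Prop :=
  ∃ w : G.Walk a b, (∀ x ∈ w.support, x ∈ D) ∧ v ∉ w.support

/-- `x` is in the branch of `v` (wrt root `r`): every `D`-walk from `r` to `x` passes `v`. -/
def XM (G : SimpleGraph V) (D : Finset V) (r v x : V) : Prop :=
  x ∈ D ∧ x ≠ v ∧ ¬ Avoids G D r x v

theorem XM.mem_D {v x : V} (h : XM G D r v x) : x ∈ D := h.1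
theorem XM.ne {v x : V} (h : XM G D r v x) : x ≠ v := h.2.1

theorem avoids_of_not_XM {v x : V} (hx : x ∈ D) (hxv : x ≠ v)
    (h : ¬ XM G D r v x) : Avoids G D r x v := by
  by_contra hA; exact h ⟨hx, hxv, hA⟩

theorem avoids_adj {v x z : V} (h : Avoids G D r x v) (hadj : G.Adj x z)
    (hz : z ∈ D) (hzv : z ≠ v) : Avoids G D r z v := by
  obtain ⟨w, hwD, hwv⟩ := h
  refine ⟨w.concat hadj, ?_, ?_⟩
  · intro y hy
    rw [SimpleGraph.Walk.support_concat, List.mem_append] at hy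
    rcases hy with hy | hy
    · exact hwD y hy
    · simp at hy; subst hy; exact hz
  · rw [SimpleGraph.Walk.support_concat, List.mem_append]
    rintro (h | h)
    · exact hwv h
    · simp at h; exact hzv h.symm

theorem not_XM_r {v : V} (hr : r ∈ D) : ¬ XM G D r v r := by
  rintro ⟨hD, hne, hA⟩
  exact hA ⟨SimpleGraph.Walk.nil, by simpa using hr, by simpa using fun h => hne h.symm⟩

end PendantAux

namespace PendantAux2
open PendantAux SimpleGraph

variable {V : Type*} [DecidableEq V] {G : SimpleGraph V} {D : Finset V} {r : V}

/-- Connectivity-within-`D` hypothesis. -/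
def DConn (G : SimpleGraph V) (D : Finset V) : Prop :=
  ∀ a ∈ D, ∀ b ∈ D, ∃ w : G.Walk a b, ∀ x ∈ w.support, x ∈ D

theorem XM_asymm (hconn : DConn G D) (hr : r ∈ D) {v w : V}
    (h1 : XM G D r v w) (h2 : XM G D r w v) : False := by
  have key : ∀ n, ∀ P : G.Walk r v, (∀ x ∈ P.support, x ∈ D) → P.length = n → False := by
    intro n
    induction n using Nat.strong_induction_on with
    | _ n IH =>
      intro P hPD hPl
      have hw : w ∈ P.support := by
        by_contra hw; exact h2.2.2 ⟨P, hPD, hw⟩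
      have hTD : ∀ x ∈ (P.takeUntil w hw).support, x ∈ D :=
        fun x hx => hPD x (P.support_takeUntil_subset hw hx)
      have hv : v ∈ (P.takeUntil w hw).support := by
        by_contra hv; exact h1.2.2 ⟨P.takeUntil w hw, hTD, hv⟩
      have hlt : (P.takeUntil w hw).length < P.length := by
        have hs := congrArg SimpleGraph.Walk.length (P.take_spec hw)
        rw [SimpleGraph.Walk.length_append] at hs
        have hd : 0 < (P.dropUntil w hw).length := by
          rcases Nat.eq_zero_or_pos (P.dropUntil w hw).length with h0 | h0
          · exact absurd (SimpleGraph.Walk.eq_of_length_eq_zero h0) h1.ne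
          · exact h0
        omega
      have hle := (P.takeUntil w hw).length_takeUntil_le hv
      exact IH ((P.takeUntil w hw).takeUntil v hv).length (by omega)
        (((P.takeUntil w hw)).takeUntil v hv)
        (fun x hx => hTD x ((P.takeUntil w hw).support_takeUntil_subset hv hx)) rfl
  obtain ⟨P, hPD⟩ := hconn r hr v h2.1
  exact key P.length P hPD rfl

theorem XM_trans (hconn : DConn G D) (hr : r ∈ D) {v w x : V}
    (hvw : XM G D r v w) (hwx : XM G D r w x) : XM G D r v x := by
  refine ⟨hwx.1, ?_, ?_⟩
  · rintro rfl; exact XM_asymm hconn hr hvw hwx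
  · rintro ⟨W, hWD, hWv⟩
    have hw : w ∈ W.support := by
      by_contra hw; exact hwx.2.2 ⟨W, hWD, hw⟩
    exact hvw.2.2 ⟨W.takeUntil w hw,
      fun y hy => hWD y (W.support_takeUntil_subset hw hy),
      fun hc => hWv (W.support_takeUntil_subset hw hc)⟩

theorem XM_total (hconn : DConn G D) (hr : r ∈ D) {v w x : V}
    (hvD : v ∈ D) (hwD : w ∈ D) (hvw : v ≠ w)
    (h1 : XM G D r v x) (h2 : XM G D r w x) : XM G D r v w ∨ XM G D r w v := by
  by_contra hcon
  push_neg at hcon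
  obtain ⟨hnvw, hnwv⟩ := hcon
  have hAwv : Avoids G D r w v := avoids_of_not_XM hwD (Ne.symm hvw) hnvw
  have hAvw : Avoids G D r v w := avoids_of_not_XM hvD hvw hnwv
  obtain ⟨P0, hP0D⟩ := hconn r hr x h1.1
  set P : G.Walk r x := P0.toPath.1 with hPdef
  have hPp : P.IsPath := P0.toPath.2
  have hPD : ∀ y ∈ P.support, y ∈ D := fun y hy => hP0D y (P0.support_toPath_subset hy)
  have hwP : w ∈ P.support := by
    by_contra hn; exact h2.2.2 ⟨P, hPD, hn⟩
  set q : G.Walk w x := P.dropUntil w hwP with hqdef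
  have hqD : ∀ y ∈ q.support, y ∈ D :=
    fun y hy => hPD y (P.support_dropUntil_subset hwP hy)
  have hvq : v ∈ q.support := by
    by_contra hv
    obtain ⟨Ww, hWwD, hWwv⟩ := hAwv
    refine h1.2.2 ⟨Ww.append q, ?_, ?_⟩
    · intro y hy
      rw [SimpleGraph.Walk.mem_support_append_iff] at hy
      rcases hy with hy | hy
      · exact hWwD y hy
      · exact hqD y hy
    · rw [SimpleGraph.Walk.mem_support_append_iff]
      rintro (h | h)
      · exact hWwv h
      · exact hv h
  set t : G.Walk v x := q.dropUntil v hvq with htdef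
  have hqpath : q.IsPath := hPp.dropUntil hwP
  have hwt : w ∉ t.support := by
    intro hwt
    have hnodup := hqpath.support_nodup
    rw [← q.take_spec hvq, SimpleGraph.Walk.support_append] at hnodup
    have hdisj := List.disjoint_of_nodup_append hnodup
    have hw1 : w ∈ (q.takeUntil v hvq).support := SimpleGraph.Walk.start_mem_support _
    have hw2 : w ∈ t.support.tail := by
      have hc := t.support_eq_cons
      rw [hc] at hwt
      rcases List.mem_cons.mp hwt with h | h
      · exact absurd h hvw.symm
      · exact h
    exact hdisj hw1 hw2
  obtain ⟨Wv, hWvD, hWvw⟩ := hAvw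
  refine h2.2.2 ⟨Wv.append t, ?_, ?_⟩
  · intro y hy
    rw [SimpleGraph.Walk.mem_support_append_iff] at hy
    rcases hy with hy | hy
    · exact hWvD y hy
    · exact hqD y (q.support_dropUntil_subset hvq hy)
  · rw [SimpleGraph.Walk.mem_support_append_iff]
    rintro (h | h)
    · exact hWvw h
    · exact hwt h

end PendantAux2

namespace PendantAux3
open PendantAux PendantAux2 SimpleGraph

set_option linter.unusedSectionVars false

variable {V : Type*} [DecidableEq V] {G : SimpleGraph V} {D : Finset V} {r : V}

theorem branch_nonempty (hr : r ∈ D) {v a b : V}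
    (ha : a ∈ D) (hb : b ∈ D) (hav : a ≠ v) (hbv : b ≠ v)
    (hnab : ¬ Avoids G D a b v) : ∃ x, XM G D r v x := by
  by_cases h1 : Avoids G D r a v
  · by_cases h2 : Avoids G D r b v
    · obtain ⟨W1, hW1D, hW1v⟩ := h1
      obtain ⟨W2, hW2D, hW2v⟩ := h2
      exfalso
      refine hnab ⟨W1.reverse.append W2, ?_, ?_⟩
      · intro y hy
        rw [SimpleGraph.Walk.mem_support_append_iff] at hy
        rcases hy with hy | hy
        · exact hW1D y (by rwa [SimpleGraph.Walk.support_reverse, List.mem_reverse] at hy)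
        · exact hW2D y hy
      · rw [SimpleGraph.Walk.mem_support_append_iff]
        rintro (h | h)
        · exact hW1v (by rwa [SimpleGraph.Walk.support_reverse, List.mem_reverse] at h)
        · exact hW2v h
    · exact ⟨b, hb, hbv, h2⟩
  · exact ⟨a, ha, hav, h1⟩

theorem no_adj_across (hconn : DConn G D) (hr : r ∈ D) {k1 k2 s : V}
    (hk1D : k1 ∈ D) (hsD : s ∈ D)
    (h12 : XM G D r k1 k2) (hs2 : XM G D r k2 s) (hadj : G.Adj k1 s) : False := by
  have hA : Avoids G D r k1 k2 :=
    avoids_of_not_XM hk1D (fun h => h12.ne h.symm)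
      (fun h21 => XM_asymm hconn hr h12 h21)
  exact hs2.2.2 (avoids_adj hA hadj hsD hs2.ne)

/-- Every branch of a non-private vertex contains a private vertex. -/
theorem exists_private_in_branch (hconn : DConn G D) (hr : r ∈ D) (C : Finset V)
    (hcut : ∀ v ∈ D, v ∉ C → v ≠ r → ∃ x, XM G D r v x)
    {k : V} (hk : k ∈ D) (hkC : k ∉ C) (hkr : k ≠ r) :
    ∃ m, XM G D r k m ∧ m ∈ C := by
  classical
  have hex : ∀ x : V, x ∈ D → ∃ n, ∃ w : G.Walk r x, (∀ y ∈ w.support, y ∈ D) ∧ w.length = n := by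
    intro x hx
    obtain ⟨w, hw⟩ := hconn r hr x hx
    exact ⟨w.length, w, hw, rfl⟩
  set dst : V → ℕ := fun x =>
    if h : ∃ n, ∃ w : G.Walk r x, (∀ y ∈ w.support, y ∈ D) ∧ w.length = n then Nat.find h else 0
    with hdst
  set T : Finset V := D.filter (fun x => XM G D r k x) with hT
  have hTne : T.Nonempty := by
    obtain ⟨x, hx⟩ := hcut k hk hkC hkr
    exact ⟨x, by simp [hT, hx.mem_D, hx]⟩
  obtain ⟨m, hmT, hmmax⟩ := T.exists_max_image dst hTne
  have hmX : XM G D r k m := by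
    rw [hT, Finset.mem_filter] at hmT; exact hmT.2
  refine ⟨m, hmX, ?_⟩
  by_contra hmC
  have hmD : m ∈ D := hmX.mem_D
  have hmr : m ≠ r := by
    rintro rfl; exact not_XM_r hr hmX
  obtain ⟨y, hy⟩ := hcut m hmD hmC hmr
  have hyX : XM G D r k y := XM_trans hconn hr hmX hy
  have hyT : y ∈ T := by simp [hT, hy.mem_D, hyX]
  -- a minimal-length D-walk from r to y passes m strictly before its end
  have hyex := hex y hy.mem_D
  have hspec := Nat.find_spec hyex
  obtain ⟨W, hWD, hWl⟩ := hspec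
  have hmW : m ∈ W.support := by
    by_contra hn; exact hy.2.2 ⟨W, hWD, hn⟩
  have hlt : (W.takeUntil m hmW).length < W.length := by
    have hs := congrArg SimpleGraph.Walk.length (W.take_spec hmW)
    rw [SimpleGraph.Walk.length_append] at hs
    have hd : 0 < (W.dropUntil m hmW).length := by
      rcases Nat.eq_zero_or_pos (W.dropUntil m hmW).length with h0 | h0
      · exact absurd (SimpleGraph.Walk.eq_of_length_eq_zero h0) (fun h => hy.ne h.symm)
      · exact h0
    omega
  have hdm : dst m < dst y := by
    have h1 : dst m ≤ (W.takeUntil m hmW).length := by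
      rw [hdst]
      simp only [dif_pos (hex m hmD)]
      exact Nat.find_le ⟨W.takeUntil m hmW,
        fun z hz => hWD z (W.support_takeUntil_subset hmW hz), rfl⟩
    have h2 : dst y = W.length := by
      rw [hdst]; simp only [dif_pos hyex]; omega
    omega
  exact absurd (hmmax y hyT) (by omega)


/-- Main combinatorial counting lemma. -/
theorem main_count (hconn : DConn G D) (hr : r ∈ D) (C : Finset V) (hCD : C ⊆ D)
    (hcut : ∀ v ∈ D, v ∉ C → v ≠ r → ∃ x, XM G D r v x) :
    ∃ S : Finset V, S ⊆ D ∧ (∀ a ∈ S, ∀ b ∈ S, ¬ G.Adj a b) ∧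
      D.card ≤ 4 * (S.card + (C \ S).card) := by
  classical
  by_cases hD4 : D.card ≤ 4
  · refine ⟨{r}, by simpa using hr, ?_, ?_⟩
    · intro a ha b hb
      simp only [Finset.mem_singleton] at ha hb
      subst ha; subst hb; exact G.loopless.irrefl _
    · have : 4 ≤ 4 * (({r} : Finset V).card + (C \ {r}).card) := by
        simp only [Finset.card_singleton]; omega
      omega
  push_neg at hD4
  -- the set of non-private, non-root vertices: all have nonempty branches
  set K' : Finset V := (D \ C).erase r with hK'
  have hK'D : K' ⊆ D := fun k hk => by
    rw [hK', Finset.mem_erase, Finset.mem_sdiff] at hk; exact hk.2.1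
  have hK'mem : ∀ k ∈ K', k ∈ D ∧ k ∉ C ∧ k ≠ r := by
    intro k hk
    rw [hK', Finset.mem_erase, Finset.mem_sdiff] at hk
    exact ⟨hk.2.1, hk.2.2, hk.1⟩
  -- a maximum-cardinality independent subset of K'
  set indep : Finset V → Prop := fun s => ∀ a ∈ s, ∀ b ∈ s, ¬ G.Adj a b with hindep
  set F : Finset (Finset V) := K'.powerset.filter indep with hF
  have hFne : F.Nonempty := ⟨∅, by simp [hF, hindep]⟩
  obtain ⟨S, hSF, hSmax⟩ := F.exists_max_image Finset.card hFne
  rw [hF, Finset.mem_filter, Finset.mem_powerset] at hSF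
  obtain ⟨hSK', hSind⟩ := hSF
  have hSD : S ⊆ D := fun s hs => hK'D (hSK' hs)
  have hSC : Disjoint S C := by
    rw [Finset.disjoint_left]
    intro a ha hc
    exact (hK'mem a (hSK' ha)).2.1 hc
  -- every vertex of K' \ S has a blocker in S
  have hblock : ∀ k ∈ K' \ S, ∃ s ∈ S, G.Adj k s := by
    intro k hk
    rw [Finset.mem_sdiff] at hk
    by_contra hno
    push_neg at hno
    have hins : insert k S ∈ F := by
      rw [hF, Finset.mem_filter, Finset.mem_powerset]
      constructor
      · exact Finset.insert_subset hk.1 hSK'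
      · intro a ha b hb
        rw [Finset.mem_insert] at ha hb
        rcases ha with rfl | ha
        · rcases hb with rfl | hb
          · exact G.loopless.irrefl _
          · exact hno b hb
        · rcases hb with rfl | hb
          · intro h; exact hno a ha h.symm
          · exact hSind a ha b hb
    have := hSmax _ hins
    rw [Finset.card_insert_of_notMem hk.2] at this
    omega
  set sfun : V → V := fun k => if h : ∃ s ∈ S, G.Adj k s then h.choose else r with hsfun
  have hsfun_spec : ∀ k ∈ K' \ S, sfun k ∈ S ∧ G.Adj k (sfun k) := by
    intro k hk
    have h := hblock k hk
    rw [hsfun]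
    simp only [dif_pos h]
    exact ⟨h.choose_spec.1, h.choose_spec.2⟩
  set A : Finset V := (K' \ S).filter (fun k => XM G D r k (sfun k)) with hA
  set R : Finset V := (K' \ S).filter (fun k => ¬ XM G D r k (sfun k)) with hR
  have hAmem : ∀ k ∈ A, k ∈ K' \ S ∧ XM G D r k (sfun k) := by
    intro k hk; rw [hA, Finset.mem_filter] at hk; exact hk
  have hRmem : ∀ k ∈ R, k ∈ K' \ S ∧ ¬ XM G D r k (sfun k) := by
    intro k hk; rw [hR, Finset.mem_filter] at hk; exact hk
  -- |A| ≤ |S|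
  have hAcard : A.card ≤ S.card := by
    apply Finset.card_le_card_of_injOn sfun
    · intro k hk; exact (hsfun_spec k (hAmem k hk).1).1
    · intro k1 hk1 k2 hk2 heq
      by_contra hne
      obtain ⟨hk1m, hX1⟩ := hAmem k1 hk1
      obtain ⟨hk2m, hX2⟩ := hAmem k2 hk2
      have hk1D : k1 ∈ D := hK'D (Finset.mem_sdiff.mp hk1m).1
      have hk2D : k2 ∈ D := hK'D (Finset.mem_sdiff.mp hk2m).1
      have hsD : sfun k1 ∈ D := hSD (hsfun_spec k1 hk1m).1
      rcases XM_total hconn hr hk1D hk2D hne hX1 (heq ▸ hX2) with h12 | h21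
      · exact no_adj_across hconn hr hk1D hsD h12 (heq ▸ hX2) (hsfun_spec k1 hk1m).2
      · exact no_adj_across hconn hr hk2D hsD h21 (heq ▸ hX1)
          (heq ▸ (hsfun_spec k2 hk2m).2)
  -- private-witness function
  set mfun : V → V := fun k => if h : ∃ m, XM G D r k m ∧ m ∈ C then h.choose else r with hmfun
  have hmfun_spec : ∀ k ∈ K', XM G D r k (mfun k) ∧ mfun k ∈ C := by
    intro k hk
    obtain ⟨hkD, hkC, hkr⟩ := hK'mem k hk
    have h : ∃ m, XM G D r k m ∧ m ∈ C :=
      exists_private_in_branch hconn hr C hcut hkD hkC hkr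
    rw [hmfun]; simp only [dif_pos h]; exact h.choose_spec
  set Xf : V → Finset V := fun v => D.filter (fun x => XM G D r v x) with hXf
  have hXf_mono : ∀ {v w : V}, XM G D r v w → Xf w ⊆ Xf v := by
    intro v w hvw x hx
    rw [hXf, Finset.mem_filter] at hx ⊢
    exact ⟨hx.1, XM_trans hconn hr hvw hx.2⟩
  set Rmin : Finset V := R.filter (fun k => ∀ k' ∈ R, ¬ XM G D r k k') with hRmin
  set Rbig : Finset V := R \ Rmin with hRbig
  have hRK' : R ⊆ K' := fun k hk => (Finset.mem_sdiff.mp (hRmem k hk).1).1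
  have hRminmem : ∀ k ∈ Rmin, k ∈ R ∧ ∀ k' ∈ R, ¬ XM G D r k k' := by
    intro k hk; rw [hRmin, Finset.mem_filter] at hk; exact hk
  have hRbigR : ∀ k ∈ Rbig, k ∈ R := by
    intro k hk; rw [hRbig, Finset.mem_sdiff] at hk; exact hk.1
  have hRminCard : Rmin.card ≤ C.card := by
    apply Finset.card_le_card_of_injOn mfun
    · intro k hk
      exact (hmfun_spec k (hRK' (hRminmem k hk).1)).2
    · intro k1 hk1 k2 hk2 heq
      by_contra hne
      obtain ⟨hk1R, hmin1⟩ := hRminmem k1 hk1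
      obtain ⟨hk2R, hmin2⟩ := hRminmem k2 hk2
      have h1 : XM G D r k1 (mfun k1) := (hmfun_spec k1 (hRK' hk1R)).1
      have h2 : XM G D r k2 (mfun k1) := heq ▸ (hmfun_spec k2 (hRK' hk2R)).1
      have hk1D : k1 ∈ D := hK'D (hRK' hk1R)
      have hk2D : k2 ∈ D := hK'D (hRK' hk2R)
      rcases XM_total hconn hr hk1D hk2D hne h1 h2 with h12 | h21
      · exact hmin1 k2 hk2R h12
      · exact hmin2 k1 hk1R h21
  -- choice of a maximal branch below each non-minimal element of R
  set chfun : V → V := fun k =>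
    if h : (R.filter (fun k' => XM G D r k k')).Nonempty then
      ((R.filter (fun k' => XM G D r k k')).exists_max_image (fun k' => (Xf k').card) h).choose
    else r with hchfun
  have hch_spec : ∀ k ∈ Rbig, (chfun k ∈ R ∧ XM G D r k (chfun k)) ∧
      ∀ k'' ∈ R, XM G D r k k'' → (Xf k'').card ≤ (Xf (chfun k)).card := by
    intro k hk
    have hk' := hk
    rw [hRbig, Finset.mem_sdiff] at hk'
    obtain ⟨hkR, hkNmin⟩ := hk'
    have hne : (R.filter (fun k' => XM G D r k k')).Nonempty := by
      rw [hRmin, Finset.mem_filter] at hkNmin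
      push_neg at hkNmin
      obtain ⟨k', hk'R, hk'X⟩ := hkNmin hkR
      exact ⟨k', Finset.mem_filter.mpr ⟨hk'R, hk'X⟩⟩
    have hspec := ((R.filter (fun k' => XM G D r k k')).exists_max_image
      (fun k' => (Xf k').card) hne).choose_spec
    have hceq : chfun k = ((R.filter (fun k' => XM G D r k k')).exists_max_image
        (fun k' => (Xf k').card) hne).choose := by
      rw [hchfun]; simp only [dif_pos hne]
    rw [hceq]
    obtain ⟨hmem, hmax⟩ := hspec
    rw [Finset.mem_filter] at hmem
    exact ⟨⟨hmem.1, hmem.2⟩, fun k'' hk'' hX => hmax k'' (Finset.mem_filter.mpr ⟨hk'', hX⟩)⟩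
  have hch_max : ∀ k ∈ Rbig, ∀ k'' ∈ R, XM G D r k k'' → ¬ XM G D r k'' (chfun k) := by
    intro k hk k'' hk''R hkk'' hXc
    obtain ⟨⟨hcR, hkc⟩, hmax⟩ := hch_spec k hk
    have hsub : Xf (chfun k) ⊆ Xf k'' := hXf_mono hXc
    have hlt : (Xf (chfun k)).card < (Xf k'').card := by
      apply Finset.card_lt_card
      rw [Finset.ssubset_iff_of_subset hsub]
      refine ⟨chfun k, ?_, ?_⟩
      · rw [hXf]; exact Finset.mem_filter.mpr ⟨hXc.mem_D, hXc⟩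
      · rw [hXf, Finset.mem_filter]
        rintro ⟨-, h⟩
        exact h.ne rfl
    have := hmax k'' hk''R hkk''
    omega
  have hphiX : ∀ k ∈ Rbig, XM G D r k (sfun (chfun k)) := by
    intro k hk
    obtain ⟨⟨hcR, hkc⟩, -⟩ := hch_spec k hk
    obtain ⟨hcKS, hcnX⟩ := hRmem _ hcR
    have hsS : sfun (chfun k) ∈ S := (hsfun_spec _ hcKS).1
    have hadj : G.Adj (chfun k) (sfun (chfun k)) := (hsfun_spec _ hcKS).2
    have hkKS : k ∈ K' \ S := (hRmem k (hRbigR k hk)).1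
    refine ⟨hSD hsS, ?_, ?_⟩
    · intro heq
      have : k ∈ S := heq ▸ hsS
      exact (Finset.mem_sdiff.mp hkKS).2 this
    · intro hA
      have hcD : chfun k ∈ D := hkc.mem_D
      exact hkc.2.2 (avoids_adj hA hadj.symm hcD hkc.ne)
  have hphi_aux : ∀ k1 ∈ Rbig, ∀ k2 ∈ Rbig, k1 ≠ k2 →
      sfun (chfun k1) = sfun (chfun k2) → XM G D r k1 k2 → False := by
    intro k1 hk1 k2 hk2 hne heq h12
    obtain ⟨⟨hc1R, hkc1⟩, -⟩ := hch_spec k1 hk1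
    obtain ⟨hc1KS, hc1nX⟩ := hRmem _ hc1R
    have hs2 : XM G D r k2 (sfun (chfun k1)) := heq ▸ hphiX k2 hk2
    have hadj1 : G.Adj (chfun k1) (sfun (chfun k1)) := (hsfun_spec _ hc1KS).2
    have hk2R : k2 ∈ R := hRbigR k2 hk2
    by_cases hceq : chfun k1 = k2
    · exact hc1nX (hceq ▸ hs2)
    · by_cases h2c : XM G D r (chfun k1) k2
      · exact hc1nX (XM_trans hconn hr h2c hs2)
      · by_cases hc2 : XM G D r k2 (chfun k1)
        · exact hch_max k1 hk1 k2 hk2R h12 hc2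
        · have hc1D : chfun k1 ∈ D := hkc1.mem_D
          have hAv : Avoids G D r (chfun k1) k2 := avoids_of_not_XM hc1D hceq hc2
          exact hs2.2.2 (avoids_adj hAv hadj1 (hSD (hsfun_spec _ hc1KS).1) hs2.ne)
  have hRbigCard : Rbig.card ≤ S.card := by
    apply Finset.card_le_card_of_injOn (fun k => sfun (chfun k))
    · intro k hk
      obtain ⟨⟨hcR, -⟩, -⟩ := hch_spec k hk
      exact (hsfun_spec _ (hRmem _ hcR).1).1
    · intro k1 hk1 k2 hk2 heq
      by_contra hne
      have heq' : sfun (chfun k1) = sfun (chfun k2) := heq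
      have h1 : XM G D r k1 (sfun (chfun k1)) := hphiX k1 hk1
      have h2 : XM G D r k2 (sfun (chfun k1)) := by
        rw [heq']; exact hphiX k2 hk2
      have hk1D : k1 ∈ D := hK'D (hRK' (hRbigR k1 hk1))
      have hk2D : k2 ∈ D := hK'D (hRK' (hRbigR k2 hk2))
      rcases XM_total hconn hr hk1D hk2D hne h1 h2 with h12 | h21
      · exact hphi_aux k1 hk1 k2 hk2 hne heq' h12
      · exact hphi_aux k2 hk2 k1 hk1 (Ne.symm hne) heq'.symm h21
  -- final counting
  have hRminR : Rmin ⊆ R := by rw [hRmin]; exact Finset.filter_subset _ _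
  have hRcard : Rmin.card + Rbig.card = R.card := by
    have := Finset.card_sdiff_add_card_eq_card hRminR
    rw [hRbig]; omega
  have hKS : A.card + R.card = (K' \ S).card := by
    rw [hA, hR]
    exact Finset.card_filter_add_card_filter_not (fun k => XM G D r k (sfun k))
  have hK'card : (K' \ S).card + S.card = K'.card :=
    Finset.card_sdiff_add_card_eq_card hSK'
  have hDsub : D ⊆ K' ∪ C ∪ {r} := by
    intro v hv
    simp only [Finset.mem_union, Finset.mem_singleton]
    by_cases hvC : v ∈ C
    · exact Or.inl (Or.inr hvC)
    · by_cases hvr : v = r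
      · exact Or.inr hvr
      · refine Or.inl (Or.inl ?_)
        rw [hK', Finset.mem_erase, Finset.mem_sdiff]
        exact ⟨hvr, hv, hvC⟩
  have hDcard : D.card ≤ K'.card + C.card + 1 := by
    calc D.card ≤ (K' ∪ C ∪ {r}).card := Finset.card_le_card hDsub
    _ ≤ (K' ∪ C).card + ({r} : Finset V).card := Finset.card_union_le _ _
    _ ≤ K'.card + C.card + 1 := by
        have := Finset.card_union_le K' C
        simp only [Finset.card_singleton]
        omega
  have hCS : (C \ S).card = C.card := by
    rw [Finset.sdiff_eq_self_of_disjoint hSC.symm]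
  refine ⟨S, hSD, hSind, ?_⟩
  by_cases hS0 : S = ∅
  · have hKS0 : K' \ S = ∅ := by
      rw [Finset.eq_empty_iff_forall_notMem]
      intro k hk
      obtain ⟨s, hsS, -⟩ := hblock k hk
      rw [hS0] at hsS
      simp at hsS
    have hK0 : K'.card = 0 := by
      rw [← hK'card, hKS0, hS0]; simp
    have hSc0 : S.card = 0 := by rw [hS0]; simp
    omega
  · have hS1 : 1 ≤ S.card := Finset.card_pos.mpr (Finset.nonempty_iff_ne_empty.mpr hS0)
    omega

end PendantAux3

section TopLevel

open PendantAux PendantAux2 PendantAux3 SimpleGraph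

set_option linter.unusedSectionVars false
set_option maxHeartbeats 1000000

variable (P P₀ : Finset (EuclideanSpace ℝ (Fin 2)))

local notation "V" => {p // p ∈ P}
local notation "V₀" => {p // p ∈ P₀}

/-- Transfer a walk in an induced subgraph on `Sum.inl '' E` down to the comap graph. -/
theorem down_walk {E : Set V} {x y : ↥(Sum.inl '' E : Set (V ⊕ V₀))}
    (w : ((pendantUnitDiskGraph P P₀).induce (Sum.inl '' E)).Walk x y)
    {a b : V} (hx : x.val = Sum.inl a) (hy : y.val = Sum.inl b)
    (haE : a ∈ E) (hbE : b ∈ E) :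
    ∃ w' : ((pendantUnitDiskGraph P P₀).comap Sum.inl).Walk a b, ∀ z ∈ w'.support, z ∈ E := by
  classical
  induction w generalizing a b with
  | nil =>
    have hab : a = b := Sum.inl_injective (hx.symm.trans hy)
    subst hab
    refine ⟨SimpleGraph.Walk.nil, ?_⟩
    intro z hz
    simp only [SimpleGraph.Walk.support_nil, List.mem_singleton] at hz
    subst hz
    exact haE
  | @cons u v q h p ih =>
    obtain ⟨c, hc, hceq⟩ := v.property
    obtain ⟨w', hw'⟩ := ih (a := c) (b := b) hceq.symm hy hc hbE
    have hadj : ((pendantUnitDiskGraph P P₀).comap Sum.inl).Adj a c := by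
      rw [SimpleGraph.comap_adj]
      have h' : (pendantUnitDiskGraph P P₀).Adj u.val v.val := h
      rwa [hx, ← hceq] at h'
    refine ⟨SimpleGraph.Walk.cons hadj w', ?_⟩
    intro z hz
    rw [SimpleGraph.Walk.support_cons, List.mem_cons] at hz
    rcases hz with rfl | hz
    · exact haE
    · exact hw' z hz

/-- Transfer a walk in the comap graph with support in `E` up to reachability in the
induced subgraph on `Sum.inl '' E`. -/
theorem up_walk {E : Set V} :
    ∀ {a b : V} (w : ((pendantUnitDiskGraph P P₀).comap Sum.inl).Walk a b),
    (∀ z ∈ w.support, z ∈ E) →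
    ∀ (x y : ↥(Sum.inl '' E : Set (V ⊕ V₀))), x.val = Sum.inl a → y.val = Sum.inl b →
    ((pendantUnitDiskGraph P P₀).induce (Sum.inl '' E)).Reachable x y := by
  intro a b w
  induction w with
  | nil =>
    intro hw x y hx hy
    have : x = y := Subtype.ext (hx.trans hy.symm)
    rw [this]
  | @cons u v c h p ih =>
    intro hw x y hx hy
    have hvE : v ∈ E := hw v (by
      rw [SimpleGraph.Walk.support_cons, List.mem_cons]
      exact Or.inr p.start_mem_support)
    have hadj : ((pendantUnitDiskGraph P P₀).induce (Sum.inl '' E)).Adj x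
        ⟨Sum.inl v, ⟨v, hvE, rfl⟩⟩ := by
      rw [SimpleGraph.comap_adj]
      show (pendantUnitDiskGraph P P₀).Adj x.val (Sum.inl v)
      rw [hx]
      exact h
    exact hadj.reachable.trans
      (ih (fun t ht => hw t (by rw [SimpleGraph.Walk.support_cons, List.mem_cons]; exact Or.inr ht))
        ⟨Sum.inl v, ⟨v, hvE, rfl⟩⟩ y rfl hy)

end TopLevel

open PendantAux PendantAux2 PendantAux3 SimpleGraph in
/-- Paper's Lemma 2: Let `D ⊆ P` be such that (i) the subgraph of the
pendant-augmented unit disk graph `G_r` induced by `D` is connected, (ii) every dummy vertex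
is adjacent to some vertex of `D`, and (iii) every `v ∈ D` is "fixed": removing `v` from `D`
either disconnects the induced subgraph or leaves some dummy vertex with no neighbor in
`D \ {v}`. Then `G_r` has an independent set `I` with `4|I| ≥ |D|`. -/
theorem exists_indep_ge_quarter (P P₀ : Finset (EuclideanSpace ℝ (Fin 2)))
    (hP : P.Nonempty) (hP₀ : P₀ ⊆ P)
    (D : Finset {p // p ∈ P})
    (hconn : ((pendantUnitDiskGraph P P₀).induce
      (Sum.inl '' (↑D : Set {p // p ∈ P}))).Connected)
    (hcov : ∀ u : {p // p ∈ P₀}, ∃ d ∈ D,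
      (pendantUnitDiskGraph P P₀).Adj (Sum.inr u) (Sum.inl d))
    (hfixed : ∀ v ∈ D,
      ¬ ((pendantUnitDiskGraph P P₀).induce
          (Sum.inl '' ((↑D : Set {p // p ∈ P}) \ {v}))).Connected ∨
      ∃ u : {p // p ∈ P₀}, ∀ d ∈ D, d ≠ v →
        ¬ (pendantUnitDiskGraph P P₀).Adj (Sum.inr u) (Sum.inl d)) :
    ∃ I : Finset ({p // p ∈ P} ⊕ {p // p ∈ P₀}),
      (∀ a ∈ I, ∀ b ∈ I, ¬ (pendantUnitDiskGraph P P₀).Adj a b) ∧ 4 * I.card ≥ D.card := by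
  classical
  have hDne : D.Nonempty := by
    obtain ⟨x⟩ := hconn.nonempty
    obtain ⟨a, ha, -⟩ := x.property
    exact ⟨a, ha⟩
  obtain ⟨r, hr⟩ := hDne
  by_cases hD4 : D.card ≤ 4
  · refine ⟨{Sum.inl r}, ?_, ?_⟩
    · intro a ha b hb
      simp only [Finset.mem_singleton] at ha hb
      subst ha; subst hb
      exact (pendantUnitDiskGraph P P₀).loopless.irrefl _
    · simp only [Finset.card_singleton]; omega
  push_neg at hD4
  set G : SimpleGraph {p // p ∈ P} := (pendantUnitDiskGraph P P₀).comap Sum.inl with hG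
  set C : Finset {p // p ∈ P} := D.filter (fun v => ∃ u : {p // p ∈ P₀},
    ∀ d ∈ D, d ≠ v → ¬ (pendantUnitDiskGraph P P₀).Adj (Sum.inr u) (Sum.inl d)) with hC
  have hconn' : DConn G D := by
    intro a ha b hb
    have hmem : ∀ c, c ∈ D → Sum.inl c ∈ (Sum.inl '' (↑D : Set {p // p ∈ P}) :
        Set ({p // p ∈ P} ⊕ {p // p ∈ P₀})) := fun c hc => ⟨c, hc, rfl⟩
    obtain ⟨w⟩ := hconn.preconnected ⟨Sum.inl a, hmem a ha⟩ ⟨Sum.inl b, hmem b hb⟩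
    obtain ⟨w', hw'⟩ := down_walk P P₀ w rfl rfl (Finset.mem_coe.mpr ha) (Finset.mem_coe.mpr hb)
    exact ⟨w', fun z hz => Finset.mem_coe.mp (hw' z hz)⟩
  have hcut : ∀ v ∈ D, v ∉ C → v ≠ r → ∃ x, XM G D r v x := by
    intro v hv hvC _
    have hdis : ¬ ((pendantUnitDiskGraph P P₀).induce
        (Sum.inl '' ((↑D : Set {p // p ∈ P}) \ {v}))).Connected := by
      rcases hfixed v hv with h | h
      · exact h
      · exact absurd (Finset.mem_filter.mpr ⟨hv, h⟩) hvC
    obtain ⟨a0, ha0D, ha0v⟩ := Finset.exists_mem_ne (s := D) (by omega) v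
    have hne : Nonempty ↥(Sum.inl '' ((↑D : Set {p // p ∈ P}) \ {v}) :
        Set ({p // p ∈ P} ⊕ {p // p ∈ P₀})) :=
      ⟨⟨Sum.inl a0, ⟨a0, ⟨Finset.mem_coe.mpr ha0D, by simp [ha0v]⟩, rfl⟩⟩⟩
    rw [SimpleGraph.connected_iff] at hdis
    push_neg at hdis
    have hnpre := hdis
    have hnp : ¬ ((pendantUnitDiskGraph P P₀).induce
        (Sum.inl '' ((↑D : Set {p // p ∈ P}) \ {v}))).Preconnected :=
      fun hp => (hdis hp).false hne.some
    simp only [SimpleGraph.Preconnected] at hnp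
    push_neg at hnp
    obtain ⟨x, y, hxy⟩ := hnp
    obtain ⟨a, haE, haeq⟩ := x.property
    obtain ⟨b, hbE, hbeq⟩ := y.property
    have haD : a ∈ D := Finset.mem_coe.mp haE.1
    have hbD : b ∈ D := Finset.mem_coe.mp hbE.1
    have hav : a ≠ v := by simpa using haE.2
    have hbv : b ≠ v := by simpa using hbE.2
    have hnavoid : ¬ Avoids G D a b v := by
      rintro ⟨w, hwD, hwv⟩
      refine hxy ?_
      refine up_walk P P₀ w ?_ x y haeq.symm hbeq.symm
      intro z hz
      refine ⟨Finset.mem_coe.mpr (hwD z hz), ?_⟩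
      simp only [Set.mem_singleton_iff]
      rintro rfl
      exact hwv hz
    exact branch_nonempty hr haD hbD hav hbv hnavoid
  obtain ⟨S, hSD, hSind, hcard⟩ := main_count hconn' hr C (Finset.filter_subset _ _) hcut
  -- dummy-vertex selection for private vertices
  set f : {p // p ∈ P} → ({p // p ∈ P} ⊕ {p // p ∈ P₀}) := fun v =>
    if h : ∃ u : {p // p ∈ P₀}, ∀ d ∈ D, d ≠ v →
        ¬ (pendantUnitDiskGraph P P₀).Adj (Sum.inr u) (Sum.inl d) then Sum.inr h.choose
    else Sum.inl v with hf
  have hfC : ∀ v ∈ C, ∃ u : {p // p ∈ P₀}, f v = Sum.inr u ∧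
      ((v : EuclideanSpace ℝ (Fin 2)) = (u : EuclideanSpace ℝ (Fin 2))) := by
    intro v hv
    rw [hC, Finset.mem_filter] at hv
    obtain ⟨hvD, h⟩ := hv
    refine ⟨h.choose, by rw [hf]; simp only [dif_pos h], ?_⟩
    obtain ⟨d, hd, hadj⟩ := hcov h.choose
    by_cases hdv : d = v
    · subst hdv
      exact hadj
    · exact absurd hadj (h.choose_spec d hd hdv)
  refine ⟨S.image Sum.inl ∪ (C \ S).image f, ?_, ?_⟩
  · intro α hα β hβ
    rw [Finset.mem_union] at hα hβ
    rcases hα with hα | hα <;> rcases hβ with hβ | hβ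
    · obtain ⟨s1, hs1, rfl⟩ := Finset.mem_image.mp hα
      obtain ⟨s2, hs2, rfl⟩ := Finset.mem_image.mp hβ
      intro h
      exact hSind s1 hs1 s2 hs2 h
    · obtain ⟨s1, hs1, rfl⟩ := Finset.mem_image.mp hα
      obtain ⟨c, hc, rfl⟩ := Finset.mem_image.mp hβ
      have hcC : c ∈ C := (Finset.mem_sdiff.mp hc).1
      have hcS : c ∉ S := (Finset.mem_sdiff.mp hc).2
      obtain ⟨u, hfu, hpt⟩ := hfC c hcC
      rw [hfu]
      intro h
      have hpt2 : (s1 : EuclideanSpace ℝ (Fin 2)) = (u : EuclideanSpace ℝ (Fin 2)) := h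
      have : s1 = c := Subtype.ext (hpt2.trans hpt.symm)
      exact hcS (this ▸ hs1)
    · obtain ⟨c, hc, rfl⟩ := Finset.mem_image.mp hα
      obtain ⟨s1, hs1, rfl⟩ := Finset.mem_image.mp hβ
      have hcC : c ∈ C := (Finset.mem_sdiff.mp hc).1
      have hcS : c ∉ S := (Finset.mem_sdiff.mp hc).2
      obtain ⟨u, hfu, hpt⟩ := hfC c hcC
      rw [hfu]
      intro h
      have hpt2 : (s1 : EuclideanSpace ℝ (Fin 2)) = (u : EuclideanSpace ℝ (Fin 2)) := h
      have : s1 = c := Subtype.ext (hpt2.trans hpt.symm)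
      exact hcS (this ▸ hs1)
    · obtain ⟨c1, hc1, rfl⟩ := Finset.mem_image.mp hα
      obtain ⟨c2, hc2, rfl⟩ := Finset.mem_image.mp hβ
      obtain ⟨u1, hfu1, -⟩ := hfC c1 (Finset.mem_sdiff.mp hc1).1
      obtain ⟨u2, hfu2, -⟩ := hfC c2 (Finset.mem_sdiff.mp hc2).1
      rw [hfu1, hfu2]
      intro h
      exact h
  · have hdisj : Disjoint (S.image Sum.inl) ((C \ S).image f) := by
      rw [Finset.disjoint_left]
      intro α hα hβ
      obtain ⟨s1, hs1, rfl⟩ := Finset.mem_image.mp hα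
      obtain ⟨c, hc, hceq⟩ := Finset.mem_image.mp hβ
      obtain ⟨u, hfu, -⟩ := hfC c (Finset.mem_sdiff.mp hc).1
      rw [hfu] at hceq
      cases hceq
    rw [Finset.card_union_of_disjoint hdisj,
      Finset.card_image_of_injective _ Sum.inl_injective,
      Finset.card_image_of_injOn]
    · omega
    · intro c1 hc1 c2 hc2 heq
      obtain ⟨u1, hfu1, hpt1⟩ := hfC c1 (Finset.mem_sdiff.mp hc1).1
      obtain ⟨u2, hfu2, hpt2⟩ := hfC c2 (Finset.mem_sdiff.mp hc2).1
      rw [hfu1, hfu2] at heq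
      have : u1 = u2 := Sum.inr_injective heq
      exact Subtype.ext (hpt1.trans (this ▸ hpt2.symm))
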